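/- arXiv:2407.11264 — 5 statements merged into one kernel-verified Lean document; each statement's English description precedes it below -/
import Mathlib

section
/- Fix α > 0 and an integer k ≥ 2. The Shannon entropy of the k-th extreme Fréchet density φ_α^{(k)}(x) = (α/(k−1)!) x^{−αk−1} e^{−x^{−α}} for x > 0 (and 0 for x ≤ 0) equals h(φ_α^{(k)}) = −log(α/(k−1)!) − ((αk+1)/α)(Σ_{i=1}^{k-1} 1/i − γ) + k, where γ is the Euler–Mascheroni constant. -/
open MeasureTheory Filter Real Set

private lemma one_le_harmonic (n : ℕ) (hn : 1 ≤ n) : (1:ℚ) ≤ harmonic n := by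
  induction n with
  | zero => omega
  | succ m ih =>
    rcases Nat.eq_zero_or_pos m with h | h
    · subst h; rw [harmonic_succ, harmonic_zero]; norm_num
    · have := ih h
      rw [harmonic_succ]
      have : (0:ℚ) < (↑(m+1))⁻¹ := by positivity
      linarith [ih h]

private lemma harmonic_ne_gamma (n : ℕ) : (harmonic n : ℝ) ≠ eulerMascheroniConstant := by
  rcases Nat.eq_zero_or_pos n with h | h
  · subst h
    simp only [harmonic_zero, Rat.cast_zero]
    exact (lt_trans one_half_pos one_half_lt_eulerMascheroniConstant).ne
  · have h1 : (1:ℝ) ≤ (harmonic n : ℝ) := by exact_mod_cast one_le_harmonic n h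
    have h2 : eulerMascheroniConstant < 2/3 := eulerMascheroniConstant_lt_two_thirds
    intro hEq; rw [← hEq] at h2; linarith

private lemma integral_pow_mul_log_mul_exp (n : ℕ) :
    IntegrableOn (fun t : ℝ => t ^ n * (Real.log t * Real.exp (-t))) (Set.Ioi 0) ∧
    ∫ t in Set.Ioi (0:ℝ), t ^ n * (Real.log t * Real.exp (-t))
      = n.factorial * ((harmonic n : ℝ) - eulerMascheroniConstant) := by
  set f : ℝ → ℂ := fun t => (t:ℂ) ^ ((n:ℂ) + 1 - 1) * (Real.log t * Real.exp (-t)) with hf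
  set I : ℂ := ∫ t : ℝ in Ioi (0:ℝ), f t with hI
  have hre : (0:ℝ) < ((n:ℂ)+1).re := by simp; positivity
  have h1 : HasDerivAt Complex.GammaIntegral I ((n:ℂ)+1) :=
    Complex.hasDerivAt_GammaIntegral hre
  have h2 : HasDerivAt Complex.Gamma I ((n:ℂ)+1) := by
    apply h1.congr_of_eventuallyEq
    have hopen : IsOpen {s : ℂ | 0 < s.re} := isOpen_lt continuous_const Complex.continuous_re
    filter_upwards [hopen.mem_nhds hre] with s hs
    exact Complex.Gamma_eq_integral hs
  have h3 : I = (n.factorial : ℂ) *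
      (-(eulerMascheroniConstant:ℂ) + ((harmonic n : ℝ):ℂ)) := by
    have := Complex.hasDerivAt_Gamma_nat n
    have := h2.unique this
    rw [this]; push_cast; ring
  have hIne : I ≠ 0 := by
    rw [h3]
    apply mul_ne_zero
    · exact_mod_cast n.factorial_ne_zero
    · intro hEq
      apply harmonic_ne_gamma n
      have : ((harmonic n : ℝ):ℂ) = ((eulerMascheroniConstant:ℝ):ℂ) := by
        linear_combination hEq
      exact_mod_cast this
  have hint : IntegrableOn f (Ioi 0) := by
    by_contra hc
    exact hIne (integral_undef hc)
  have key : ∀ t ∈ Ioi (0:ℝ), (f t).re = t ^ n * (Real.log t * Real.exp (-t)) := by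
    intro t ht
    have h4 : ((n:ℂ) + 1 - 1) = ((n:ℕ):ℂ) := by ring
    have : f t = ((t ^ n * (Real.log t * Real.exp (-t)) : ℝ) : ℂ) := by
      rw [hf]; simp only [h4, Complex.cpow_natCast]; push_cast; ring
    rw [this, Complex.ofReal_re]
  have haeeq : (fun t => (f t).re)
      =ᶠ[ae (volume.restrict (Ioi (0:ℝ)))] fun t => t ^ n * (Real.log t * Real.exp (-t)) := by
    filter_upwards [ae_restrict_mem measurableSet_Ioi] with t ht using key t ht
  have hintR : IntegrableOn (fun t : ℝ => t ^ n * (Real.log t * Real.exp (-t))) (Ioi 0) :=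
    hint.re.congr haeeq
  refine ⟨hintR, ?_⟩
  have hval : ∫ t in Ioi (0:ℝ), t ^ n * (Real.log t * Real.exp (-t)) = I.re := by
    rw [← integral_congr_ae haeeq]
    exact integral_re hint
  rw [hval, h3]
  have : (n.factorial : ℂ) * (-(eulerMascheroniConstant:ℂ) + ((harmonic n : ℝ):ℂ))
      = (((n.factorial : ℝ) * ((harmonic n : ℝ) - eulerMascheroniConstant) : ℝ) : ℂ) := by
    push_cast; ring
  rw [this, Complex.ofReal_re]


/-- Shannon entropy of the k-th extreme Fréchet density
`φ_α^{(k)}(x) = (α/(k-1)!) x^{-αk-1} e^{-x^{-α}}` for `x > 0`. -/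
theorem entropy_kth_extreme_frechet (α : ℝ) (hα : 0 < α) (k : ℕ) (hk : 2 ≤ k)
    (φ : ℝ → ℝ)
    (hφ : ∀ x : ℝ, 0 < x →
      φ x = α / (k - 1).factorial * x ^ (-(α * k) - 1) * Real.exp (-(x ^ (-α))))
    (hφ0 : ∀ x : ℝ, x ≤ 0 → φ x = 0) :
    (- ∫ x in Set.Ioi (0 : ℝ), φ x * Real.log (φ x)) =
      - Real.log (α / (k - 1).factorial)
        - ((α * k + 1) / α) * ((∑ i ∈ Finset.Icc 1 (k - 1), (1 : ℝ) / i)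
            - eulerMascheroniConstant)
        + k := by
  set m : ℕ := k - 1 with hmdef
  have hm1 : 1 ≤ m := by omega
  have hkR : (k:ℝ) = (m:ℝ) + 1 := by
    have : k = m + 1 := by omega
    rw [this]; push_cast; ring
  have hfac : ((m.factorial : ℝ)) ≠ 0 := by exact_mod_cast m.factorial_ne_zero
  set c : ℝ := α / (m.factorial : ℝ) with hc_def
  have hc : 0 < c := by positivity
  set g : ℝ → ℝ := fun t => (1 / (m.factorial:ℝ)) * (t ^ m * Real.exp (-t)) *
      (Real.log c + ((α*k+1)/α) * Real.log t - t) with hg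
  -- Step 1: pointwise identity
  have step1 : Set.EqOn (fun x => φ x * Real.log (φ x))
      (fun x => (|(-α)| * x ^ (-α - 1)) • g (x ^ (-α))) (Set.Ioi 0) := by
    intro x hx
    have hx0 : (0:ℝ) < x := hx
    have ht : 0 < x ^ (-α) := Real.rpow_pos_of_pos hx0 _
    have hxp : 0 < x ^ (-(α*k) - 1) := Real.rpow_pos_of_pos hx0 _
    have hφx : φ x = c * x ^ (-(α*k) - 1) * Real.exp (-(x ^ (-α))) := hφ x hx0
    have hlog : Real.log (φ x) = Real.log c + (-(α*k) - 1) * Real.log x - x ^ (-α) := by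
      rw [hφx, Real.log_mul (by positivity) (Real.exp_ne_zero _), Real.log_mul hc.ne' hxp.ne',
        Real.log_rpow hx0, Real.log_exp]
      ring
    simp only [smul_eq_mul]
    rw [hlog, hφx]
    simp only [hg]
    rw [Real.log_rpow hx0]
    have e1 : (x ^ (-α)) ^ m = x ^ (-α * (m:ℝ)) := by
      rw [← Real.rpow_natCast (x ^ (-α)) m, ← Real.rpow_mul hx0.le]
    have e2 : x ^ (-(α*k) - 1) = x ^ (-α - 1) * x ^ (-α * (m:ℝ)) := by
      rw [← Real.rpow_add hx0]; congr 1; rw [hkR]; ring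
    have habs : |(-α)| = α := by rw [abs_neg, abs_of_pos hα]
    rw [e1, e2, habs, hc_def]
    field_simp
    ring
  have hsub : ∫ x in Set.Ioi (0:ℝ), φ x * Real.log (φ x) = ∫ t in Set.Ioi (0:ℝ), g t := by
    rw [setIntegral_congr_fun measurableSet_Ioi step1]
    exact integral_comp_rpow_Ioi g (neg_ne_zero.mpr hα.ne')
  -- integrability facts
  have hA : IntegrableOn (fun t:ℝ => t ^ m * Real.exp (-t)) (Set.Ioi 0) := by
    have h := Real.GammaIntegral_convergent (s := (m:ℝ)+1) (by positivity)
    apply h.congr_fun ?_ measurableSet_Ioi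
    intro t ht
    show Real.exp (-t) * t ^ ((m:ℝ)+1-1) = t ^ m * Real.exp (-t)
    rw [add_sub_cancel_right, Real.rpow_natCast]; ring
  have hC : IntegrableOn (fun t:ℝ => t ^ (m+1) * Real.exp (-t)) (Set.Ioi 0) := by
    have h := Real.GammaIntegral_convergent (s := (m:ℝ)+2) (by positivity)
    apply h.congr_fun ?_ measurableSet_Ioi
    intro t ht
    show Real.exp (-t) * t ^ ((m:ℝ)+2-1) = t ^ (m+1) * Real.exp (-t)
    have h2 : ((m:ℝ) + 2 - 1) = ((m+1:ℕ):ℝ) := by push_cast; ring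
    rw [h2, Real.rpow_natCast]; ring
  obtain ⟨hB, vB⟩ := integral_pow_mul_log_mul_exp m
  have vA : ∫ t in Set.Ioi (0:ℝ), t ^ m * Real.exp (-t) = (m.factorial:ℝ) := by
    rw [← Real.Gamma_nat_eq_factorial,
      Real.Gamma_eq_integral (by positivity : (0:ℝ) < (m:ℝ)+1)]
    refine setIntegral_congr_fun measurableSet_Ioi fun t ht => ?_
    show t ^ m * Real.exp (-t) = Real.exp (-t) * t ^ ((m:ℝ)+1-1)
    rw [add_sub_cancel_right, Real.rpow_natCast]; ring
  have vC : ∫ t in Set.Ioi (0:ℝ), t ^ (m+1) * Real.exp (-t) = ((m+1).factorial:ℝ) := by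
    rw [← Real.Gamma_nat_eq_factorial,
      Real.Gamma_eq_integral (by positivity : (0:ℝ) < ((m+1:ℕ):ℝ)+1)]
    refine setIntegral_congr_fun measurableSet_Ioi fun t ht => ?_
    show t ^ (m+1) * Real.exp (-t) = Real.exp (-t) * t ^ (((m+1:ℕ):ℝ)+1-1)
    rw [add_sub_cancel_right, Real.rpow_natCast]; ring
  -- decompose g
  have hg_eq : Set.EqOn g (fun t =>
      (Real.log c / m.factorial) * (t ^ m * Real.exp (-t))
      + ((α*k+1)/(α*m.factorial)) * (t ^ m * (Real.log t * Real.exp (-t)))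
      - (1/(m.factorial:ℝ)) * (t ^ (m+1) * Real.exp (-t))) (Set.Ioi 0) := by
    intro t ht
    simp only [hg, pow_succ]
    field_simp
  have h1 : Integrable (fun t : ℝ =>
      (Real.log c / m.factorial) * (t ^ m * Real.exp (-t))
      + ((α*k+1)/(α*m.factorial)) * (t ^ m * (Real.log t * Real.exp (-t))))
      (volume.restrict (Set.Ioi 0)) :=
    (hA.const_mul _).add (hB.const_mul _)
  have h2 : Integrable (fun t : ℝ => (1/(m.factorial:ℝ)) * (t ^ (m+1) * Real.exp (-t)))
      (volume.restrict (Set.Ioi 0)) := hC.const_mul _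
  have hA' : Integrable (fun t : ℝ => (Real.log c / m.factorial) * (t ^ m * Real.exp (-t)))
      (volume.restrict (Set.Ioi 0)) := hA.const_mul _
  have hB' : Integrable (fun t : ℝ =>
      ((α*k+1)/(α*m.factorial)) * (t ^ m * (Real.log t * Real.exp (-t))))
      (volume.restrict (Set.Ioi 0)) := hB.const_mul _
  have hgval : ∫ t in Set.Ioi (0:ℝ), g t
      = Real.log c + ((α*k+1)/α) * ((harmonic m : ℝ) - eulerMascheroniConstant) - (k:ℝ) := by
    rw [setIntegral_congr_fun measurableSet_Ioi hg_eq]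
    rw [integral_sub h1 h2, integral_add hA' hB',
      MeasureTheory.integral_const_mul, MeasureTheory.integral_const_mul, MeasureTheory.integral_const_mul, vA, vB, vC]
    have hfs : ((m+1).factorial : ℝ) = ((m:ℝ)+1) * (m.factorial:ℝ) := by
      rw [Nat.factorial_succ]; push_cast; ring
    rw [hfs, hkR]
    field_simp
  have hsum : (∑ i ∈ Finset.Icc 1 (k-1), (1:ℝ)/i) = (harmonic m : ℝ) := by
    rw [harmonic_eq_sum_Icc]
    push_cast
    simp [one_div]
    rfl
  rw [hsub, hgval, hsum]
  ring
end

section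
/- Fix α > 0 and an integer k ≥ 2. The Shannon entropy of the k-th extreme Weibull density ψ_α^{(k)}(x) = (α/(k−1)!) (−x)^{αk−1} e^{−(−x)^{α}} for x < 0 (and 0 for x ≥ 0) equals h(ψ_α^{(k)}) = −log(α/(k−1)!) − ((αk−1)/α)(Σ_{i=1}^{k-1} 1/i − γ) + k, where γ is the Euler–Mascheroni constant. -/
open MeasureTheory Filter Real

section Helpers

lemma abs_log_le' {t : ℝ} (ht : 0 < t) : |Real.log t| ≤ t + t⁻¹ := by
  rcases le_or_gt 1 t with h | h
  · rw [abs_of_nonneg (Real.log_nonneg h)]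
    have h2 : (0:ℝ) < t⁻¹ := by positivity
    linarith [Real.log_le_sub_one_of_pos ht]
  · rw [abs_of_nonpos (Real.log_nonpos ht.le h.le), ← Real.log_inv]
    linarith [Real.log_le_sub_one_of_pos (inv_pos.mpr ht)]

lemma integrableOn_rpow_log_exp {a : ℝ} (ha : 1 < a) :
    IntegrableOn (fun t : ℝ => t ^ (a-1) * (Real.log t * Real.exp (-t))) (Set.Ioi 0) := by
  refine ((Real.GammaIntegral_convergent (by linarith : (0:ℝ) < a+1)).add
    (Real.GammaIntegral_convergent (by linarith : (0:ℝ) < a-1))).mono'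
    ((measurable_id.pow_const _).mul
      (Real.measurable_log.mul measurable_neg.exp)).aestronglyMeasurable ?_
  filter_upwards [self_mem_ae_restrict measurableSet_Ioi] with t ht
  have ht0 : (0:ℝ) < t := ht
  rw [Real.norm_eq_abs, abs_mul, abs_mul, abs_of_nonneg (Real.rpow_nonneg ht0.le _),
    abs_of_nonneg (Real.exp_pos _).le]
  calc t ^ (a-1) * (|Real.log t| * Real.exp (-t))
      ≤ t ^ (a-1) * ((t + t⁻¹) * Real.exp (-t)) := by
        exact mul_le_mul_of_nonneg_left
          (mul_le_mul_of_nonneg_right (abs_log_le' ht0) (Real.exp_pos _).le)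
          (Real.rpow_nonneg ht0.le _)
    _ = Real.exp (-t) * t ^ (a+1-1) + Real.exp (-t) * t ^ (a-1-1) := by
        rw [show a+1-1 = (a-1)+1 by ring, show a-1-1 = (a-1)+(-1) by ring,
          Real.rpow_add_one ht0.ne', Real.rpow_add ht0, Real.rpow_neg_one]
        generalize t ^ (a-1) = X
        ring

lemma gamma_log_integral (k : ℕ) (hk : 1 ≤ k) :
    ∫ t in Set.Ioi (0:ℝ), t ^ ((k:ℝ)-1) * (Real.log t * Real.exp (-t)) =
      (k-1).factorial * ((harmonic (k-1) : ℝ) - Real.eulerMascheroniConstant) := by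
  have hs : (0:ℝ) < (k:ℝ) := by exact_mod_cast hk
  set I : ℝ := ∫ t in Set.Ioi (0:ℝ), t ^ ((k:ℝ)-1) * (Real.log t * Real.exp (-t)) with hI
  have h1 : HasDerivAt Complex.GammaIntegral
      (∫ t : ℝ in Set.Ioi 0, (t:ℂ) ^ (((k:ℝ):ℂ) - 1) * (Real.log t * Real.exp (-t))) ((k:ℝ):ℂ) :=
    Complex.hasDerivAt_GammaIntegral (by simpa using hs)
  have h2 : (∫ t : ℝ in Set.Ioi 0, (t:ℂ) ^ (((k:ℝ):ℂ) - 1) * (Real.log t * Real.exp (-t)))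
      = (I : ℂ) := by
    have : (∫ t : ℝ in Set.Ioi 0, (t:ℂ) ^ (((k:ℝ):ℂ) - 1) * (Real.log t * Real.exp (-t)))
        = ∫ t : ℝ in Set.Ioi 0, ((t ^ ((k:ℝ)-1) * (Real.log t * Real.exp (-t)) : ℝ) : ℂ) := by
      refine setIntegral_congr_fun measurableSet_Ioi fun t ht => ?_
      rw [Complex.ofReal_mul, Complex.ofReal_cpow (le_of_lt ht)]
      push_cast
      ring
    rw [this, hI]; exact integral_ofReal
  rw [h2] at h1
  have h3 : HasDerivAt (fun x : ℝ => (Complex.GammaIntegral x).re) ((I:ℂ)).re (k:ℝ) :=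
    h1.real_of_complex
  rw [Complex.ofReal_re] at h3
  have h4 : HasDerivAt Real.Gamma I (k:ℝ) := by
    refine h3.congr_of_eventuallyEq ?_
    filter_upwards [eventually_gt_nhds hs] with x hx
    rw [Real.Gamma_eq_integral hx, Complex.GammaIntegral_ofReal, Complex.ofReal_re]
  have h5 : HasDerivAt Real.Gamma
      (((k-1).factorial : ℝ) * (-Real.eulerMascheroniConstant + (harmonic (k-1) : ℝ))) (k:ℝ) := by
    have := Real.hasDerivAt_Gamma_nat (k-1)
    rwa [show ((k-1:ℕ):ℝ) + 1 = (k:ℝ) by push_cast [hk]; ring] at this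
  rw [h4.unique h5]
  ring

end Helpers

/-- Shannon entropy of the k-th extreme Weibull density
`ψ_α^{(k)}(x) = (α/(k-1)!) (-x)^{αk-1} e^{-(-x)^α}` for `x < 0`. -/
theorem entropy_kth_extreme_weibull (α : ℝ) (hα : 0 < α) (k : ℕ) (hk : 2 ≤ k)
    (ψ : ℝ → ℝ)
    (hψ : ∀ x : ℝ, x < 0 →
      ψ x = α / (k - 1).factorial * (-x) ^ (α * k - 1) * Real.exp (-((-x) ^ α)))
    (hψ0 : ∀ x : ℝ, 0 ≤ x → ψ x = 0) :
    (- ∫ x in Set.Iio (0 : ℝ), ψ x * Real.log (ψ x)) =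
      - Real.log (α / (k - 1).factorial)
        - ((α * k - 1) / α) * ((∑ i ∈ Finset.Icc 1 (k - 1), (1 : ℝ) / i)
            - eulerMascheroniConstant)
        + k := by
  have hk1 : 1 ≤ k := by omega
  have hkpos : (0:ℝ) < (k:ℝ) := by positivity
  have hfac : (0:ℝ) < ((k-1).factorial : ℝ) := by positivity
  set C : ℝ := α / ((k-1).factorial : ℝ) with hCdef
  set β : ℝ := α * (k:ℝ) - 1 with hβdef
  have hC : 0 < C := div_pos hα hfac
  set P : ℝ → ℝ := fun y => C * y ^ β * Real.exp (-(y^α)) *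
    (Real.log C + β * Real.log y - y^α) with hP
  set f : ℝ → ℝ := fun t => (C/α) * (t ^ ((k:ℝ)-1) * Real.exp (-t)) *
    (Real.log C + (β/α) * Real.log t - t) with hf
  set H : ℝ := (harmonic (k-1) : ℝ) with hHdef
  -- Step A : rewrite integrand on Iio 0
  have hA : (∫ x in Set.Iio (0:ℝ), ψ x * Real.log (ψ x))
      = ∫ x in Set.Iio (0:ℝ), P (-x) := by
    refine setIntegral_congr_fun measurableSet_Iio fun x hx => ?_
    have hx0 : (0:ℝ) < -x := by simpa using Set.mem_Iio.mp hx
    have hpow : (0:ℝ) < (-x) ^ β := Real.rpow_pos_of_pos hx0 _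
    rw [hψ x hx, hP]
    simp only []
    rw [Real.log_mul (by positivity) (Real.exp_ne_zero _),
      Real.log_mul hC.ne' hpow.ne', Real.log_exp, Real.log_rpow hx0]
    ring
  -- Step B : reflect to Ioi 0
  have hB : (∫ x in Set.Iio (0:ℝ), P (-x)) = ∫ y in Set.Ioi (0:ℝ), P y := by
    rw [← integral_Iic_eq_integral_Iio, integral_comp_neg_Iic, neg_zero]
  -- Step C : substitution t = y^α
  have hC2 : (∫ y in Set.Ioi (0:ℝ), P y) = ∫ t in Set.Ioi (0:ℝ), f t := by
    rw [← integral_comp_rpow_Ioi_of_pos hα (g := f)]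
    refine setIntegral_congr_fun measurableSet_Ioi fun y hy => ?_
    have hy0 : (0:ℝ) < y := hy
    have hmul : y^(α-1) * y^(α*((k:ℝ)-1)) = y^β := by
      rw [← Real.rpow_add hy0, hβdef]; ring_nf
    rw [hP, hf, smul_eq_mul]
    simp only []
    rw [Real.log_rpow hy0, ← Real.rpow_mul hy0.le, ← hmul]
    field_simp
  -- Step D : evaluate the Gamma-type integrals
  have i1 : IntegrableOn (fun t : ℝ => Real.exp (-t) * t ^ ((k:ℝ)-1)) (Set.Ioi 0) :=
    Real.GammaIntegral_convergent hkpos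
  have i2 : IntegrableOn (fun t : ℝ => t ^ ((k:ℝ)-1) * (Real.log t * Real.exp (-t)))
      (Set.Ioi 0) := integrableOn_rpow_log_exp (by exact_mod_cast hk)
  have i3 : IntegrableOn (fun t : ℝ => Real.exp (-t) * t ^ ((k:ℝ)+1-1)) (Set.Ioi 0) :=
    Real.GammaIntegral_convergent (by positivity)
  have hG1 : ∫ t in Set.Ioi (0:ℝ), Real.exp (-t) * t ^ ((k:ℝ)-1) = ((k-1).factorial : ℝ) := by
    rw [← Real.Gamma_eq_integral hkpos,
      show (k:ℝ) = ((k-1:ℕ):ℝ)+1 by rw [Nat.cast_sub hk1]; push_cast; ring,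
      Real.Gamma_nat_eq_factorial]
  have hG3 : ∫ t in Set.Ioi (0:ℝ), Real.exp (-t) * t ^ ((k:ℝ)+1-1) = (k.factorial : ℝ) := by
    rw [← Real.Gamma_eq_integral (by positivity), Real.Gamma_nat_eq_factorial]
  have hG2 := gamma_log_integral k hk1
  have hD : (∫ t in Set.Ioi (0:ℝ), f t) = Real.log C + (β/α) * (H - eulerMascheroniConstant)
      - (k:ℝ) := by
    have hsplit : Set.EqOn f (fun t =>
        ((C/α) * Real.log C) * (Real.exp (-t) * t ^ ((k:ℝ)-1)) +
        ((C/α) * (β/α)) * (t ^ ((k:ℝ)-1) * (Real.log t * Real.exp (-t))) +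
        (-(C/α)) * (Real.exp (-t) * t ^ ((k:ℝ)+1-1))) (Set.Ioi 0) := by
      intro t ht
      have ht0 : (0:ℝ) < t := ht
      rw [hf]
      simp only []
      rw [show (k:ℝ)+1-1 = ((k:ℝ)-1)+1 by ring, Real.rpow_add_one ht0.ne']
      ring
    have j1 : Integrable (fun t : ℝ => ((C/α) * Real.log C) * (Real.exp (-t) * t ^ ((k:ℝ)-1)))
        (volume.restrict (Set.Ioi 0)) := i1.const_mul _
    have j2 : Integrable (fun t : ℝ =>
        ((C/α) * (β/α)) * (t ^ ((k:ℝ)-1) * (Real.log t * Real.exp (-t))))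
        (volume.restrict (Set.Ioi 0)) := i2.const_mul _
    have j3 : Integrable (fun t : ℝ => (-(C/α)) * (Real.exp (-t) * t ^ ((k:ℝ)+1-1)))
        (volume.restrict (Set.Ioi 0)) := i3.const_mul _
    have j12 : Integrable (fun t : ℝ =>
        ((C/α) * Real.log C) * (Real.exp (-t) * t ^ ((k:ℝ)-1)) +
        ((C/α) * (β/α)) * (t ^ ((k:ℝ)-1) * (Real.log t * Real.exp (-t))))
        (volume.restrict (Set.Ioi 0)) := j1.add j2
    rw [setIntegral_congr_fun measurableSet_Ioi hsplit,
      integral_add j12 j3, integral_add j1 j2,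
      MeasureTheory.integral_const_mul, MeasureTheory.integral_const_mul, MeasureTheory.integral_const_mul, hG1, hG3, hG2, ← hHdef]
    have hCα : C/α = ((k-1).factorial : ℝ)⁻¹ := by
      rw [hCdef]; field_simp
    have hkfac : (k.factorial : ℝ) = (k:ℝ) * ((k-1).factorial : ℝ) := by
      rw [← Nat.mul_factorial_pred (by omega : k ≠ 0)]; push_cast; ring
    rw [hCα, hkfac]
    field_simp
    ring
  -- conclude
  have hHsum : H = ∑ i ∈ Finset.Icc 1 (k-1), (1:ℝ)/i := by
    rw [hHdef, harmonic_eq_sum_Icc]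
    push_cast
    simp [one_div]
  rw [hA, hB, hC2, hD, hHsum]
  ring
end

section
/- Fix an integer k ≥ 2. The Shannon entropy of the k-th extreme Gumbel density λ^{(k)}(x) = (1/(k−1)!) e^{−kx} e^{−e^{−x}}, x ∈ ℝ, equals h(λ^{(k)}) = log (k−1)! − k(Σ_{i=1}^{k-1} 1/i − γ) + k, where γ is the Euler–Mascheroni constant. -/
open MeasureTheory Filter Real Set

namespace GumbelAux

-- value of the log-Gamma integral
lemma gammaLog_value (k : ℕ) (hk : 1 ≤ k) :
    ∫ t in Ioi (0:ℝ), t ^ ((k:ℝ) - 1) * Real.log t * Real.exp (-t)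
      = (k - 1).factorial * ((harmonic (k-1) : ℝ) - Real.eulerMascheroniConstant) := by
  have hkpos : (0:ℝ) < k := by exact_mod_cast Nat.lt_of_lt_of_le Nat.zero_lt_one hk
  have h1 : HasDerivAt Complex.GammaIntegral
      (∫ t : ℝ in Ioi 0, (t:ℂ) ^ ((k:ℂ) - 1) * (Real.log t * Real.exp (-t))) (k:ℂ) :=
    Complex.hasDerivAt_GammaIntegral (by simpa using hkpos)
  have h2 : Complex.Gamma =ᶠ[nhds (k:ℂ)] Complex.GammaIntegral := by
    have hopen : IsOpen {s : ℂ | 0 < s.re} := isOpen_lt continuous_const Complex.continuous_re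
    filter_upwards [hopen.mem_nhds (by simpa using hkpos)] with s hs
    exact Complex.Gamma_eq_integral hs
  have h3 : HasDerivAt Complex.Gamma
      (∫ t : ℝ in Ioi 0, (t:ℂ) ^ ((k:ℂ) - 1) * (Real.log t * Real.exp (-t))) (k:ℂ) :=
    h1.congr_of_eventuallyEq h2
  have h4 : (∫ t : ℝ in Ioi 0, (t:ℂ) ^ ((k:ℂ) - 1) * (Real.log t * Real.exp (-t)))
      = ((∫ t in Ioi (0:ℝ), t ^ ((k:ℝ) - 1) * Real.log t * Real.exp (-t) : ℝ) : ℂ) := by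
    have step : (∫ t : ℝ in Ioi 0, (t:ℂ) ^ ((k:ℂ) - 1) * (Real.log t * Real.exp (-t)))
        = ∫ t in Ioi (0:ℝ), ((t ^ ((k:ℝ) - 1) * Real.log t * Real.exp (-t) : ℝ) : ℂ) := by
      refine setIntegral_congr_fun measurableSet_Ioi (fun t ht => ?_)
      have ht0 : (0:ℝ) ≤ t := le_of_lt ht
      have hexp : ((k:ℂ) - 1) = (((k:ℝ) - 1 : ℝ) : ℂ) := by push_cast; ring
      rw [hexp, ← Complex.ofReal_cpow ht0]
      push_cast
      ring
    rw [step]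
    exact integral_ofReal
  rw [h4] at h3
  have h5 : HasDerivAt Real.Gamma
      (∫ t in Ioi (0:ℝ), t ^ ((k:ℝ) - 1) * Real.log t * Real.exp (-t)) (k:ℝ) := by
    have h3' : HasDerivAt Complex.Gamma
        (((∫ t in Ioi (0:ℝ), t ^ ((k:ℝ) - 1) * Real.log t * Real.exp (-t) : ℝ)) : ℂ)
        (((k:ℝ) : ℂ)) := by exact_mod_cast h3
    have := h3'.real_of_complex
    rw [show Real.Gamma = fun x : ℝ => (Complex.Gamma x).re from rfl]
    simpa using this
  have h6 : HasDerivAt Real.Gamma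
      ((k-1).factorial * (-Real.eulerMascheroniConstant + harmonic (k-1))) (k:ℝ) := by
    have := Real.hasDerivAt_Gamma_nat (k-1)
    have hc : ((k-1 : ℕ) : ℝ) + 1 = (k:ℝ) := by
      rw [Nat.cast_sub hk]; ring
    rwa [hc] at this
  have := h5.unique h6
  rw [this]; ring

-- substitution x ↦ exp (-x)
lemma subst_exp_neg (g : ℝ → ℝ) :
    ∫ x : ℝ, Real.exp (-x) * g (Real.exp (-x)) = ∫ t in Ioi (0:ℝ), g t := by
  have hderiv : ∀ x ∈ (univ : Set ℝ),
      HasDerivWithinAt (fun x => Real.exp (-x)) (-Real.exp (-x)) univ x := fun x _ =>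
    (((Real.hasDerivAt_exp (-x)).comp x (hasDerivAt_neg x)).congr_deriv
      (by ring)).hasDerivWithinAt
  have himage : (fun x => Real.exp (-x)) '' univ = Ioi 0 := by
    rw [show (fun x => Real.exp (-x)) = Real.exp ∘ Neg.neg from rfl, Set.image_comp,
      Set.image_univ_of_surjective neg_surjective, Set.image_univ, Real.range_exp]
  have hinj : Set.InjOn (fun x => Real.exp (-x)) univ :=
    (Real.exp_injective.comp neg_injective).injOn
  rw [← himage, integral_image_eq_integral_abs_deriv_smul MeasurableSet.univ hderiv hinj g]
  rw [Measure.restrict_univ]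
  refine integral_congr_ae (Eventually.of_forall fun x => ?_)
  simp [abs_of_pos (Real.exp_pos _)]

lemma abs_log_le (t : ℝ) (ht : 0 < t) : |Real.log t| ≤ t⁻¹ + t := by
  rw [abs_le]
  constructor
  · have h1 : Real.log t⁻¹ ≤ t⁻¹ - 1 := Real.log_le_sub_one_of_pos (by positivity)
    rw [Real.log_inv] at h1
    nlinarith
  · have h2 : Real.log t ≤ t - 1 := Real.log_le_sub_one_of_pos ht
    nlinarith [inv_pos.mpr ht]

lemma integrable_log_gamma (k : ℕ) (hk : 2 ≤ k) :
    IntegrableOn (fun t : ℝ => t ^ ((k:ℝ) - 1) * Real.log t * Real.exp (-t)) (Ioi 0) := by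
  have h1 : IntegrableOn (fun t : ℝ => Real.exp (-t) * t ^ (((k:ℝ) - 1) - 1)) (Ioi 0) := by
    have h2k : (2:ℝ) ≤ k := by exact_mod_cast hk
    have := Real.GammaIntegral_convergent (s := (k:ℝ) - 1) (by linarith)
    simpa using this
  have h2 : IntegrableOn (fun t : ℝ => Real.exp (-t) * t ^ (((k:ℝ) + 1) - 1)) (Ioi 0) := by
    have := Real.GammaIntegral_convergent (s := (k:ℝ) + 1) (by positivity)
    simpa using this
  refine Integrable.mono (h1.add h2) ?_ ?_
  · apply AEStronglyMeasurable.mul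
    apply AEStronglyMeasurable.mul
    · exact (measurable_id.pow_const _).aestronglyMeasurable.congr
        (ae_restrict_of_ae (Eventually.of_forall fun t => rfl)) |>.congr
        (Eventually.of_forall fun t => rfl)
    · exact Real.measurable_log.aestronglyMeasurable
    · exact (Real.continuous_exp.comp continuous_neg).aestronglyMeasurable
  · rw [ae_restrict_iff' measurableSet_Ioi]
    refine Eventually.of_forall fun t ht => ?_
    have ht : (0:ℝ) < t := ht
    have hb := abs_log_le t ht
    have htpow : (0:ℝ) < t ^ ((k:ℝ) - 1) := Real.rpow_pos_of_pos ht _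
    have key : t ^ ((k:ℝ) - 1) * |Real.log t| * Real.exp (-t)
        ≤ Real.exp (-t) * t ^ (((k:ℝ) - 1) - 1) + Real.exp (-t) * t ^ (((k:ℝ) + 1) - 1) := by
      have e1 : t ^ (((k:ℝ) - 1) - 1) = t ^ ((k:ℝ) - 1) * t⁻¹ := by
        rw [Real.rpow_sub ht, Real.rpow_one]; ring
      have e2 : t ^ (((k:ℝ) + 1) - 1) = t ^ ((k:ℝ) - 1) * t := by
        rw [show ((k:ℝ) + 1) - 1 = ((k:ℝ) - 1) + 1 by ring, Real.rpow_add ht, Real.rpow_one]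
      rw [e1, e2]
      have := mul_le_mul_of_nonneg_left hb htpow.le
      nlinarith [Real.exp_pos (-t), mul_le_mul_of_nonneg_right this (Real.exp_pos (-t)).le]
    calc ‖t ^ ((k:ℝ) - 1) * Real.log t * Real.exp (-t)‖
        = t ^ ((k:ℝ) - 1) * |Real.log t| * Real.exp (-t) := by
          rw [Real.norm_eq_abs, abs_mul, abs_mul, abs_of_pos htpow,
            abs_of_pos (Real.exp_pos _)]
      _ ≤ Real.exp (-t) * t ^ (((k:ℝ) - 1) - 1) + Real.exp (-t) * t ^ (((k:ℝ) + 1) - 1) := key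
      _ ≤ ‖Real.exp (-t) * t ^ (((k:ℝ) - 1) - 1) + Real.exp (-t) * t ^ (((k:ℝ) + 1) - 1)‖ :=
          le_abs_self _

lemma harmonic_cast (n : ℕ) :
    (harmonic n : ℝ) = ∑ i ∈ Finset.Icc 1 n, (1 : ℝ) / i := by
  rw [harmonic_eq_sum_Icc]
  push_cast
  refine Finset.sum_congr rfl fun i _ => ?_
  rw [one_div]

end GumbelAux

/-- Shannon entropy of the k-th extreme Gumbel density
`λ^{(k)}(x) = (1/(k-1)!) e^{-kx} e^{-e^{-x}}`. -/
theorem entropy_kth_extreme_gumbel (k : ℕ) (hk : 2 ≤ k)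
    (lam : ℝ → ℝ)
    (hlam : ∀ x : ℝ,
      lam x = (1 / (k - 1).factorial : ℝ) * Real.exp (-(k * x)) * Real.exp (-Real.exp (-x))) :
    (- ∫ x : ℝ, lam x * Real.log (lam x)) =
      Real.log (k - 1).factorial
        - k * ((∑ i ∈ Finset.Icc 1 (k - 1), (1 : ℝ) / i) - eulerMascheroniConstant)
        + k := by
  classical
  set c : ℝ := 1 / (k - 1).factorial with hc
  have hfact_pos : (0:ℝ) < (k - 1).factorial := by exact_mod_cast (k-1).factorial_pos
  have hcpos : 0 < c := by positivity
  set G : ℝ → ℝ := fun t => c * Real.log c * (Real.exp (-t) * t ^ ((k:ℝ) - 1))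
      + (c * k * (t ^ ((k:ℝ) - 1) * Real.log t * Real.exp (-t))
        - c * (Real.exp (-t) * t ^ (((k:ℝ) + 1) - 1))) with hG
  -- pointwise identity
  have hpt : ∀ x : ℝ, lam x * Real.log (lam x) = Real.exp (-x) * G (Real.exp (-x)) := by
    intro x
    set t : ℝ := Real.exp (-x) with hts
    have ht : 0 < t := Real.exp_pos _
    have hlogt : Real.log t = -x := Real.log_exp (-x)
    have hpow : t ^ ((k:ℝ)) = Real.exp (-(k * x)) := by
      rw [Real.rpow_def_of_pos ht, hlogt]
      ring_nf
    have hlamx : lam x = c * t ^ ((k:ℝ)) * Real.exp (-t) := by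
      rw [hlam x, hpow, hc]
    have hloglam : Real.log (lam x) = Real.log c + (k:ℝ) * Real.log t - t := by
      rw [hlamx, Real.log_mul (by positivity) (Real.exp_ne_zero _),
        Real.log_mul (ne_of_gt hcpos) (ne_of_gt (Real.rpow_pos_of_pos ht _)),
        Real.log_rpow ht]
      simp only [Real.log_exp, hlogt]
      ring
    rw [hloglam, hlamx]
    simp only [hG]
    have e2 : t ^ (((k:ℝ) + 1) - 1) = t ^ ((k:ℝ) - 1) * t := by
      calc t ^ (((k:ℝ) + 1) - 1) = t ^ (((k:ℝ) - 1) + 1) := by norm_num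
        _ = t ^ ((k:ℝ) - 1) * t ^ (1:ℝ) := Real.rpow_add ht _ _
        _ = t ^ ((k:ℝ) - 1) * t := by rw [Real.rpow_one]
    have e3 : t ^ ((k:ℝ)) = t * t ^ ((k:ℝ) - 1) := by
      calc t ^ ((k:ℝ)) = t ^ ((1:ℝ) + ((k:ℝ) - 1)) := by norm_num
        _ = t ^ (1:ℝ) * t ^ ((k:ℝ) - 1) := Real.rpow_add ht _ _
        _ = t * t ^ ((k:ℝ) - 1) := by rw [Real.rpow_one]
    rw [e2, e3]
    ring
  -- integrability
  have intA : IntegrableOn (fun t : ℝ => Real.exp (-t) * t ^ ((k:ℝ) - 1)) (Ioi 0) :=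
    Real.GammaIntegral_convergent (by positivity)
  have intC : IntegrableOn (fun t : ℝ => Real.exp (-t) * t ^ (((k:ℝ) + 1) - 1)) (Ioi 0) :=
    Real.GammaIntegral_convergent (by positivity)
  have intB := GumbelAux.integrable_log_gamma k hk
  -- values
  have valA : ∫ t in Ioi (0:ℝ), Real.exp (-t) * t ^ ((k:ℝ) - 1) = (k - 1).factorial := by
    rw [← Real.Gamma_eq_integral (by positivity : (0:ℝ) < k)]
    rw [show ((k:ℝ)) = ((k-1 : ℕ) : ℝ) + 1 by rw [Nat.cast_sub (by omega)]; ring]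
    exact Real.Gamma_nat_eq_factorial (k-1)
  have valC : ∫ t in Ioi (0:ℝ), Real.exp (-t) * t ^ (((k:ℝ) + 1) - 1) = k.factorial := by
    rw [← Real.Gamma_eq_integral (by positivity : (0:ℝ) < (k:ℝ) + 1)]
    exact_mod_cast Real.Gamma_nat_eq_factorial k
  have valB := GumbelAux.gammaLog_value k (by omega)
  -- compute the integral
  have hint : ∫ x : ℝ, lam x * Real.log (lam x) = ∫ t in Ioi (0:ℝ), G t := by
    rw [show (fun x : ℝ => lam x * Real.log (lam x))
        = fun x : ℝ => Real.exp (-x) * G (Real.exp (-x)) from funext hpt]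
    exact GumbelAux.subst_exp_neg G
  have hsplit : ∫ t in Ioi (0:ℝ), G t
      = c * Real.log c * ((k-1).factorial : ℝ)
        + (c * k * ((k - 1).factorial * ((harmonic (k-1) : ℝ) - Real.eulerMascheroniConstant))
          - c * (k.factorial : ℝ)) := by
    have i1 : Integrable (fun t : ℝ => c * Real.log c * (Real.exp (-t) * t ^ ((k:ℝ) - 1)))
        (volume.restrict (Ioi 0)) := intA.const_mul _
    have i2 : Integrable (fun t : ℝ => c * ↑k * (t ^ ((k:ℝ) - 1) * Real.log t * Real.exp (-t))
        - c * (Real.exp (-t) * t ^ (((k:ℝ) + 1) - 1))) (volume.restrict (Ioi 0)) :=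
      (intB.const_mul _).sub (intC.const_mul _)
    have i3 : Integrable (fun t : ℝ => c * ↑k * (t ^ ((k:ℝ) - 1) * Real.log t * Real.exp (-t)))
        (volume.restrict (Ioi 0)) := intB.const_mul _
    have i4 : Integrable (fun t : ℝ => c * (Real.exp (-t) * t ^ (((k:ℝ) + 1) - 1)))
        (volume.restrict (Ioi 0)) := intC.const_mul _
    rw [hG]
    rw [integral_add i1 i2, integral_sub i3 i4,
      integral_const_mul, integral_const_mul, integral_const_mul, valA, valB, valC]
  have hfactk : (k.factorial : ℝ) = k * ((k-1).factorial : ℝ) := by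
    rw [show k = (k-1) + 1 by omega, Nat.factorial_succ]
    push_cast [show k - 1 + 1 = k by omega]
    ring
  have hlogc : Real.log c = - Real.log (k-1).factorial := by
    rw [hc, one_div, Real.log_inv]
  have hcfact : c * ((k-1).factorial : ℝ) = 1 := by
    rw [hc]; field_simp
  have hharm := GumbelAux.harmonic_cast (k-1)
  rw [hint, hsplit, hlogc, hfactk, ← hharm]
  linear_combination (Real.log ((k-1).factorial : ℝ)
    - (k:ℝ) * ((harmonic (k-1) : ℝ) - Real.eulerMascheroniConstant) + (k:ℝ)) * hcfact
end

section
/- For every integer k ≥ 1, the mean of the k-th extreme Gumbel law satisfies ∫_{−∞}^{∞} y · (1/(k−1)!) e^{−ky} e^{−e^{−y}} dy = γ − Σ_{i=1}^{k-1} 1/i, where γ is the Euler–Mascheroni constant. -/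
open MeasureTheory Filter Real

section Aux

open Set Complex

private theorem rexp_neg_deriv_aux' :
    ∀ x ∈ Set.univ, HasDerivWithinAt (rexp ∘ Neg.neg) (-rexp (-x)) Set.univ x :=
  fun x _ ↦ mul_neg_one (rexp (-x)) ▸
    ((Real.hasDerivAt_exp (-x)).comp x (hasDerivAt_neg x)).hasDerivWithinAt

private theorem rexp_neg_image_aux' : rexp ∘ Neg.neg '' Set.univ = Set.Ioi 0 := by
  rw [Set.image_comp, Set.image_univ_of_surjective neg_surjective, Set.image_univ,
    Real.range_exp]

private theorem rexp_neg_injOn_aux' : Set.univ.InjOn (rexp ∘ Neg.neg) :=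
  Real.exp_injective.injOn.comp neg_injective.injOn (Set.mapsTo_univ _ _)

/-- `∫_0^∞ t^n log t e^{-t} dt = Γ'(n+1) = n! (-γ + H_n)`. -/
private theorem log_gamma_integral (n : ℕ) :
    ∫ t : ℝ in Set.Ioi (0:ℝ), t ^ (n : ℝ) * (Real.log t * Real.exp (-t)) =
      (n.factorial : ℝ) * (-Real.eulerMascheroniConstant + harmonic n) := by
  set d : ℂ := ∫ t : ℝ in Set.Ioi (0:ℝ),
      (t : ℂ) ^ ((n + 1 : ℂ) - 1) * (Real.log t * Real.exp (-t)) with hd_def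
  have hre : (0:ℝ) < ((n : ℂ) + 1).re := by simp; positivity
  have hdI : HasDerivAt Complex.GammaIntegral d ((n : ℂ) + 1) :=
    Complex.hasDerivAt_GammaIntegral hre
  have heq : Complex.Gamma =ᶠ[nhds ((n : ℂ) + 1)] Complex.GammaIntegral := by
    have : {s : ℂ | 0 < s.re} ∈ nhds ((n : ℂ) + 1) :=
      (isOpen_lt continuous_const Complex.continuous_re).mem_nhds hre
    filter_upwards [this] with s hs using Complex.Gamma_eq_integral hs
  have hdG : HasDerivAt Complex.Gamma d ((n : ℂ) + 1) := hdI.congr_of_eventuallyEq heq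
  have hcast : ((((n : ℝ) + 1) : ℝ) : ℂ) = (n : ℂ) + 1 := by push_cast; ring
  have hR : HasDerivAt (fun x : ℝ => (Complex.Gamma (x : ℂ)).re) d.re ((n : ℝ) + 1) :=
    HasDerivAt.real_of_complex (hcast ▸ hdG)
  have hRG : HasDerivAt Real.Gamma d.re ((n : ℝ) + 1) := hR
  have hder : d.re = (n.factorial : ℝ) * (-Real.eulerMascheroniConstant + harmonic n) := by
    rw [← Real.deriv_Gamma_nat n, hRG.deriv]
  -- identify d.re with the real integral
  have hd2 : d = ((∫ t : ℝ in Set.Ioi (0:ℝ),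
      t ^ (n : ℝ) * (Real.log t * Real.exp (-t)) : ℝ) : ℂ) := by
    calc d = ∫ t : ℝ in Set.Ioi (0:ℝ),
        ((t ^ (n : ℝ) * (Real.log t * Real.exp (-t)) : ℝ) : ℂ) := by
          rw [hd_def]
          refine setIntegral_congr_fun measurableSet_Ioi fun t ht => ?_
          have ht' : (0:ℝ) ≤ t := le_of_lt ht
          rw [show ((n:ℂ) + 1 - 1) = (((n:ℝ):ℝ) : ℂ) by push_cast; ring,
            ← Complex.ofReal_cpow ht']
          push_cast
          ring
      _ = _ := integral_ofReal
  rw [← hder, hd2, Complex.ofReal_re]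

end Aux

/-- the mean of the k-th extreme Gumbel law is `γ - Σ_{i=1}^{k-1} 1/i`. -/
theorem mean_kth_extreme_gumbel (k : ℕ) (hk : 1 ≤ k) :
    ∫ y : ℝ, y * ((1 / (k - 1).factorial : ℝ) * Real.exp (-(k * y)) * Real.exp (-Real.exp (-y))) =
      eulerMascheroniConstant - ∑ i ∈ Finset.Icc 1 (k - 1), (1 : ℝ) / i := by
  obtain ⟨n, rfl⟩ : ∃ n, k = n + 1 := ⟨k - 1, (Nat.succ_pred_eq_of_pos hk).symm⟩
  simp only [Nat.add_sub_cancel]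
  -- substitution t = e^{-y}
  have hsub : (∫ t : ℝ in Set.Ioi (0:ℝ), -(t ^ (n : ℝ) * (Real.log t * Real.exp (-t))))
      = ∫ y : ℝ, y * (Real.exp (-((n + 1 : ℕ) * y)) * Real.exp (-Real.exp (-y))) := by
    rw [← rexp_neg_image_aux',
      MeasureTheory.integral_image_eq_integral_abs_deriv_smul MeasurableSet.univ
        rexp_neg_deriv_aux' rexp_neg_injOn_aux'
        (fun t => -(t ^ (n : ℝ) * (Real.log t * Real.exp (-t)))),
      MeasureTheory.setIntegral_univ]
    refine integral_congr_ae (Filter.Eventually.of_forall fun y => ?_)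
    have h1 : |(-rexp (-y))| = rexp (-y) := by
      rw [abs_neg, abs_of_pos (Real.exp_pos _)]
    have h2 : (rexp (-y)) ^ (n : ℝ) = rexp (-y * n) :=
      (Real.rpow_natCast _ n).trans (by rw [← Real.exp_nat_mul]; ring_nf)
    simp only [Function.comp_apply, smul_eq_mul, h1, h2, Real.log_exp]
    rw [show -(((n:ℕ) + 1 : ℕ) * y : ℝ) = -y + -y * n from by push_cast; ring, Real.exp_add]
    ring
  have hgamma := log_gamma_integral n
  have hint : ∫ y : ℝ, y * (Real.exp (-((n + 1 : ℕ) * y)) * Real.exp (-Real.exp (-y)))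
      = (n.factorial : ℝ) * (Real.eulerMascheroniConstant - harmonic n) := by
    rw [← hsub, integral_neg, hgamma]; ring
  have hfac : (0:ℝ) < (n.factorial : ℝ) := by positivity
  calc ∫ y : ℝ, y * ((1 / (n.factorial) : ℝ) * Real.exp (-((n + 1 : ℕ) * y))
        * Real.exp (-Real.exp (-y)))
      = (1 / (n.factorial) : ℝ) * ∫ y : ℝ,
          y * (Real.exp (-((n + 1 : ℕ) * y)) * Real.exp (-Real.exp (-y))) := by
        rw [← integral_const_mul]
        refine integral_congr_ae (Filter.Eventually.of_forall fun y => ?_)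
        ring
    _ = Real.eulerMascheroniConstant - harmonic n := by
        rw [hint]; field_simp
    _ = Real.eulerMascheroniConstant - ∑ i ∈ Finset.Icc 1 n, (1 : ℝ) / i := by
        congr 1
        rw [harmonic_eq_sum_Icc]
        push_cast
        simp [one_div]
end

section
/- Fix α > 0 and an integer k ≥ 2. Then ∫_0^∞ log( Φ_α(x) · x^{−α(k−1)} ) φ_α^{(k)}(x) dx = −k − (k−1)( γ − Σ_{i=1}^{k-1} 1/i ), where Φ_α(x) = exp(−x^{−α}) and φ_α^{(k)}(x) = (α/(k−1)!) x^{−αk−1} e^{−x^{−α}} for x > 0, and γ is the Euler–Mascheroni constant. -/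
open MeasureTheory Filter Real

section auxiliary

open Set

local notation "γ" => Real.eulerMascheroniConstant

lemma integrableOn_exp_rpow_log {c : ℝ} (hc : 0 ≤ c) :
    IntegrableOn (fun t : ℝ => Real.exp (-t) * t ^ c * Real.log t) (Ioi 0) := by
  have cont : ContinuousOn (fun t : ℝ => Real.exp (-t) * t ^ c * Real.log t) (Ioi 0) := by
    refine ContinuousOn.mul (ContinuousOn.mul ?_ ?_) ?_
    · exact (Real.continuous_exp.comp continuous_neg).continuousOn
    · exact fun x hx => (Real.continuousAt_rpow_const x c (Or.inl (ne_of_gt hx))).continuousWithinAt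
    · exact fun x hx => (Real.continuousAt_log (ne_of_gt hx)).continuousWithinAt
  have hmeas : AEStronglyMeasurable (fun t : ℝ => Real.exp (-t) * t ^ c * Real.log t) (volume.restrict (Ioi 0)) := cont.aestronglyMeasurable measurableSet_Ioi
  rw [← Ioc_union_Ioi_eq_Ioi (zero_le_one : (0:ℝ) ≤ 1), integrableOn_union]
  constructor
  · have hg : IntegrableOn (fun t : ℝ => 2 * t ^ (-(1:ℝ)/2)) (Ioc 0 1) := by
      have h : IntegrableOn (fun t : ℝ => t ^ (-(1:ℝ)/2)) (Ioc 0 1) :=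
        (intervalIntegrable_iff_integrableOn_Ioc_of_le zero_le_one).mp
          (intervalIntegral.intervalIntegrable_rpow' (by norm_num))
      exact h.const_mul 2
    refine Integrable.mono' hg
      (hmeas.mono_measure (Measure.restrict_mono Ioc_subset_Ioi_self le_rfl)) ?_
    rw [ae_restrict_iff' measurableSet_Ioc]
    filter_upwards with t ht
    obtain ⟨ht0, ht1⟩ := ht
    have hexp : Real.exp (-t) ≤ 1 := by
      rw [Real.exp_le_one_iff]; linarith
    have hrp : t ^ c ≤ 1 := Real.rpow_le_one ht0.le ht1 hc
    have hrpn : 0 ≤ t ^ c := Real.rpow_nonneg ht0.le c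
    have hlog : |Real.log t| ≤ 2 * t ^ (-(1:ℝ)/2) := by
      have h1 : Real.log (t ^ (-(1:ℝ)/2)) ≤ t ^ (-(1:ℝ)/2) - 1 :=
        Real.log_le_sub_one_of_pos (Real.rpow_pos_of_pos ht0 _)
      have h2 : Real.log (t ^ (-(1:ℝ)/2)) = (-(1:ℝ)/2) * Real.log t := Real.log_rpow ht0 _
      rw [abs_of_nonpos (Real.log_nonpos ht0.le ht1)]
      nlinarith [Real.rpow_nonneg ht0.le (-(1:ℝ)/2)]
    have : ‖Real.exp (-t) * t ^ c * Real.log t‖ = Real.exp (-t) * t ^ c * |Real.log t| := by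
      rw [Real.norm_eq_abs, abs_mul, abs_mul, abs_of_nonneg (Real.exp_pos _).le,
        abs_of_nonneg hrpn]
    rw [this]
    have h1 : Real.exp (-t) * t ^ c ≤ 1 := by nlinarith [(Real.exp_pos (-t)).le]
    have h2 : Real.exp (-t) * t ^ c * |Real.log t| ≤ 1 * (2 * t ^ (-(1:ℝ)/2)) :=
      mul_le_mul h1 hlog (abs_nonneg _) zero_le_one
    linarith
  · have hg : IntegrableOn (fun t : ℝ => Real.exp (-t) * t ^ (c + 1)) (Ioi 1) := by
      have h := Real.GammaIntegral_convergent (show (0:ℝ) < c + 2 by linarith)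
      have he : c + 2 - 1 = c + 1 := by ring
      rw [he] at h
      exact h.mono_set (Ioi_subset_Ioi zero_le_one)
    refine Integrable.mono' hg
      (hmeas.mono_measure (Measure.restrict_mono (Ioi_subset_Ioi zero_le_one) le_rfl)) ?_
    rw [ae_restrict_iff' measurableSet_Ioi]
    filter_upwards with t ht
    rw [mem_Ioi] at ht
    have ht0 : (0:ℝ) < t := lt_trans zero_lt_one ht
    have hlog : |Real.log t| ≤ t := by
      rw [abs_of_nonneg (Real.log_nonneg ht.le)]
      linarith [Real.log_le_sub_one_of_pos ht0]
    have hrp : t ^ (c + 1) = t ^ c * t := Real.rpow_add_one (ne_of_gt ht0) c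
    have : ‖Real.exp (-t) * t ^ c * Real.log t‖ = Real.exp (-t) * t ^ c * |Real.log t| := by
      rw [Real.norm_eq_abs, abs_mul, abs_mul, abs_of_nonneg (Real.exp_pos _).le,
        abs_of_nonneg (Real.rpow_nonneg ht0.le c)]
    rw [this, hrp]
    calc Real.exp (-t) * t ^ c * |Real.log t| ≤ Real.exp (-t) * t ^ c * t :=
          mul_le_mul_of_nonneg_left hlog (by positivity)
      _ = Real.exp (-t) * (t ^ c * t) := by ring

lemma integral_exp_rpow_log_eq (n : ℕ) :
    ∫ t in Ioi (0:ℝ), Real.exp (-t) * t ^ (n:ℝ) * Real.log t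
      = (n.factorial : ℝ) * (-γ + (harmonic n : ℝ)) := by
  -- complex derivative of GammaIntegral at n+1
  have hre : (0:ℝ) < ((n:ℂ)+1).re := by
    simp only [Complex.add_re, Complex.natCast_re, Complex.one_re]
    positivity
  have hD := Complex.hasDerivAt_GammaIntegral hre
  -- Gamma agrees with GammaIntegral near n+1
  have hev : Complex.Gamma =ᶠ[nhds ((n:ℂ)+1)] Complex.GammaIntegral := by
    have hopen : IsOpen {z : ℂ | 0 < z.re} := isOpen_lt continuous_const Complex.continuous_re
    filter_upwards [hopen.mem_nhds hre] with z hz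
    exact Complex.Gamma_eq_integral hz
  have hD' : HasDerivAt Complex.Gamma
      (∫ t : ℝ in Ioi 0, (t:ℂ) ^ (((n:ℂ)+1) - 1) * (Real.log t * Real.exp (-t))) ((n:ℂ)+1) :=
    hD.congr_of_eventuallyEq hev
  -- identify the complex integral with the real one
  have hDval : (∫ t : ℝ in Ioi 0, (t:ℂ) ^ (((n:ℂ)+1) - 1) * (Real.log t * Real.exp (-t)))
      = ((∫ t in Ioi (0:ℝ), Real.exp (-t) * t ^ (n:ℝ) * Real.log t : ℝ) : ℂ) := by
    have hco : ∀ r : ℝ, Complex.ofReal r = @RCLike.ofReal ℂ _ r := fun r => rfl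
    conv_rhs => rw [hco, ← _root_.integral_ofReal]
    refine setIntegral_congr_fun measurableSet_Ioi fun t ht => ?_
    have h1 : (t:ℂ) ^ (((n:ℂ)+1) - 1) = ((t ^ (n:ℝ) : ℝ) : ℂ) := by
      rw [Complex.ofReal_cpow (le_of_lt ht)]
      norm_num
    rw [h1, ← hco]
    push_cast
    ring
  rw [hDval] at hD'
  -- move to the real Gamma function
  have hpt : ((n:ℂ)+1) = ((((n:ℝ)+1 : ℝ)) : ℂ) := by push_cast; ring
  rw [hpt] at hD'
  have hR := hD'.real_of_complex
  have hfun : (fun x : ℝ => (Complex.Gamma (x:ℂ)).re) = Real.Gamma := by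
    funext x
    rw [Complex.Gamma_ofReal, Complex.ofReal_re]
  rw [hfun, Complex.ofReal_re] at hR
  have hNat := Real.hasDerivAt_Gamma_nat n
  exact hR.unique hNat

end auxiliary

/-- `∫_0^∞ log(Φ_α(x) x^{-α(k-1)}) φ_α^{(k)}(x) dx
= -k - (k-1)(γ - Σ_{i=1}^{k-1} 1/i)`. -/
theorem integral_log_frechet_kth_extreme (α : ℝ) (hα : 0 < α) (k : ℕ) (hk : 2 ≤ k) :
    ∫ x in Set.Ioi (0 : ℝ),
        Real.log (Real.exp (-(x ^ (-α))) * x ^ (-(α * ((k : ℝ) - 1)))) *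
          (α / (k - 1).factorial * x ^ (-(α * k) - 1) * Real.exp (-(x ^ (-α)))) =
      - (k : ℝ) - ((k : ℝ) - 1) *
        (eulerMascheroniConstant - ∑ i ∈ Finset.Icc 1 (k - 1), (1 : ℝ) / i) := by
  classical
  set n := k - 1 with hn
  have hkn : k = n + 1 := by omega
  have hcast : ((k:ℝ) - 1) = (n:ℝ) := by rw [hkn]; push_cast; ring
  have hkc : (k:ℝ) = (n:ℝ) + 1 := by rw [hkn]; push_cast; ring
  have hfac : ((n.factorial : ℕ) : ℝ) ≠ 0 := by
    exact_mod_cast n.factorial_ne_zero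
  set g : ℝ → ℝ := fun t =>
    ((n.factorial : ℕ) : ℝ)⁻¹ * ((-t + (n:ℝ) * Real.log t) * (t ^ (n:ℝ) * Real.exp (-t)))
    with hg
  have step1 : ∫ x in Set.Ioi (0 : ℝ),
        Real.log (Real.exp (-(x ^ (-α))) * x ^ (-(α * ((k : ℝ) - 1)))) *
          (α / (k - 1).factorial * x ^ (-(α * k) - 1) * Real.exp (-(x ^ (-α)))) =
      ∫ x in Set.Ioi (0:ℝ), (|(-α)| * x ^ (-α - 1)) • g (x ^ (-α)) := by
    refine setIntegral_congr_fun measurableSet_Ioi fun x hx => ?_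
    rw [Set.mem_Ioi] at hx
    have hxa : (0:ℝ) < x ^ (-α) := rpow_pos_of_pos hx _
    have hlog1 : Real.log (Real.exp (-(x ^ (-α))) * x ^ (-(α * ((k : ℝ) - 1))))
        = -(x ^ (-α)) + (-(α * ((k:ℝ) - 1))) * Real.log x := by
      rw [Real.log_mul (Real.exp_ne_zero _) (rpow_pos_of_pos hx _).ne', Real.log_exp,
        Real.log_rpow hx]
    have hlog2 : Real.log (x ^ (-α)) = -α * Real.log x := Real.log_rpow hx _
    have hpow1 : (x ^ (-α)) ^ (n:ℝ) = x ^ (-α * (n:ℝ)) := (Real.rpow_mul hx.le _ _).symm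
    have hpow2 : x ^ (-α - 1) * x ^ (-α * (n:ℝ)) = x ^ (-(α * k) - 1) := by
      rw [← Real.rpow_add hx]
      congr 1
      rw [hkc]; ring
    rw [smul_eq_mul, hg]
    simp only []
    rw [hlog1, hlog2, hpow1, abs_neg, abs_of_pos hα]
    have h1 : (↑(k-1).factorial : ℝ) = ((n.factorial : ℕ) : ℝ) := by rw [← hn]
    rw [h1, div_eq_mul_inv]
    linear_combination
      (-(α * ((n.factorial : ℕ) : ℝ)⁻¹ * Real.exp (-(x ^ (-α))) *
        (-(x ^ (-α)) + -(α * ((k:ℝ) - 1)) * Real.log x))) * hpow2 +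
      (-(α ^ 2 * ((n.factorial : ℕ) : ℝ)⁻¹ * Real.exp (-(x ^ (-α))) * Real.log x *
        (x ^ (-α - 1) * x ^ (-α * (n:ℝ))))) * hcast
  rw [step1, integral_comp_rpow_Ioi g (neg_ne_zero.mpr hα.ne')]
  -- rewrite g on Ioi 0 as a linear combination
  have step2 : ∫ t in Set.Ioi (0:ℝ), g t =
      ∫ t in Set.Ioi (0:ℝ),
        ((n:ℝ) * ((n.factorial : ℕ) : ℝ)⁻¹) * (Real.exp (-t) * t ^ (n:ℝ) * Real.log t)
          - ((n.factorial : ℕ) : ℝ)⁻¹ * (Real.exp (-t) * t ^ ((n:ℝ) + 1)) := by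
    refine setIntegral_congr_fun measurableSet_Ioi fun t ht => ?_
    rw [Set.mem_Ioi] at ht
    have hpow : t ^ ((n:ℝ) + 1) = t ^ (n:ℝ) * t := Real.rpow_add_one (ne_of_gt ht) _
    rw [hg]
    simp only []
    rw [hpow]
    ring
  have hInt1 : IntegrableOn (fun t : ℝ => Real.exp (-t) * t ^ (n:ℝ) * Real.log t) (Set.Ioi 0) :=
    integrableOn_exp_rpow_log (Nat.cast_nonneg n)
  have hInt2 : IntegrableOn (fun t : ℝ => Real.exp (-t) * t ^ ((n:ℝ) + 1)) (Set.Ioi 0) := by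
    have h := Real.GammaIntegral_convergent (show (0:ℝ) < (n:ℝ) + 2 by positivity)
    have he : (n:ℝ) + 2 - 1 = (n:ℝ) + 1 := by ring
    rwa [he] at h
  have hI2 : ∫ t in Set.Ioi (0:ℝ), Real.exp (-t) * t ^ ((n:ℝ) + 1)
      = ((n+1).factorial : ℝ) := by
    have h := Real.Gamma_eq_integral (show (0:ℝ) < (n:ℝ) + 2 by positivity)
    have he : (n:ℝ) + 2 - 1 = (n:ℝ) + 1 := by ring
    rw [he] at h
    rw [← h]
    have h2 : ((n:ℝ) + 2) = ((n+1 : ℕ) : ℝ) + 1 := by push_cast; ring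
    rw [h2, Real.Gamma_nat_eq_factorial]
  have hI1 := integral_exp_rpow_log_eq n
  rw [step2, integral_sub (hInt1.const_mul _) (hInt2.const_mul _),
    integral_const_mul, integral_const_mul, hI1, hI2]
  have hHarm : (harmonic n : ℝ) = ∑ i ∈ Finset.Icc 1 n, (1:ℝ) / i := by
    rw [harmonic_eq_sum_Icc]
    push_cast
    simp [one_div]
  have hfac2 : ((n+1).factorial : ℝ) = ((n:ℝ) + 1) * ((n.factorial : ℕ) : ℝ) := by
    rw [Nat.factorial_succ]; push_cast; ring
  rw [hHarm, hfac2, hkc]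
  field_simp
  ring
end
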